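/- For any finite nonempty subset A of an abelian group G and integers k, l ≥ 2, the sum over all (x_1,...,x_{k-1}) ∈ G^{k-1} of |A ∩ (A+x_1) ∩ ... ∩ (A+x_{k-1})|^l equals the sum over all (y_1,...,y_{l-1}) ∈ G^{l-1} of |A ∩ (A+y_1) ∩ ... ∩ (A+y_{l-1})|^k. -/
import Mathlib


open Finset Pointwise

/-- `R A x` = |A ∩ (A+x 0) ∩ ... ∩ (A+x (k-1))| : the number of `a ∈ A` with
`a ∈ A + x i` (equivalently `a - x i ∈ A`) for every `i`. -/
def R {G : Type*} [AddCommGroup G] [DecidableEq G] (A : Finset G) {k : ℕ}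
    (x : Fin k → G) : ℕ :=
  (A.filter fun a => ∀ i, a - x i ∈ A).card

open Fintype in
/-- The auxiliary counting finset: pairs `(x, a)` with the `x i` in `A - A`,
the `a j` in `A`, and all differences `a j - x i` in `A`. -/
def T {G : Type*} [AddCommGroup G] [DecidableEq G] (A : Finset G) (m n : ℕ) :
    Finset ((Fin (m + 1) → G) × (Fin (n + 2) → G)) :=
  ((piFinset fun _ : Fin (m + 1) => A - A) ×ˢ (piFinset fun _ : Fin (n + 2) => A)).filter
    fun p => ∀ j i, p.2 j - p.1 i ∈ A

open Fintype in
lemma mem_T_iff {G : Type*} [AddCommGroup G] [DecidableEq G] (A : Finset G) (m n : ℕ)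
    (p : (Fin (m + 1) → G) × (Fin (n + 2) → G)) :
    p ∈ T A m n ↔ (∀ i, p.1 i ∈ A - A) ∧ (∀ j, p.2 j ∈ A) ∧ ∀ j i, p.2 j - p.1 i ∈ A := by
  simp [T, Finset.mem_filter, Finset.mem_product, mem_piFinset, and_assoc]

open Fintype in
lemma finsum_eq_T_card {G : Type*} [AddCommGroup G] [DecidableEq G] (A : Finset G) (m n : ℕ) :
    ∑ᶠ x : Fin (m + 1) → G, R A x ^ (n + 2) = (T A m n).card := by
  have hsupp : (Function.support fun x : Fin (m + 1) → G => R A x ^ (n + 2)) ⊆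
      ↑(piFinset fun _ : Fin (m + 1) => A - A) := by
    intro x hx
    simp only [Function.mem_support, pow_ne_zero_iff (Nat.succ_ne_zero _)] at hx
    have : (A.filter fun a => ∀ i, a - x i ∈ A).Nonempty :=
      Finset.card_pos.1 (Nat.pos_of_ne_zero hx)
    obtain ⟨a, ha⟩ := this
    rw [Finset.mem_filter] at ha
    simp only [Fintype.coe_piFinset, Set.mem_pi, Set.mem_univ, forall_true_left]
    intro i
    have : x i = a - (a - x i) := by abel
    rw [this]
    exact Finset.sub_mem_sub ha.1 (ha.2 i)
  rw [finsum_eq_sum_of_support_subset _ hsupp]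
  have hRpow : ∀ x : Fin (m + 1) → G, R A x ^ (n + 2) =
      ((piFinset fun _ : Fin (n + 2) => A).filter fun a => ∀ j i, a j - x i ∈ A).card := by
    intro x
    have h1 : R A x ^ (n + 2) =
        (piFinset fun _ : Fin (n + 2) => A.filter fun a => ∀ i, a - x i ∈ A).card := by
      rw [Fintype.card_piFinset_const]; rfl
    rw [h1]
    congr 1
    ext a
    simp only [mem_piFinset, Finset.mem_filter]
    constructor
    · intro h
      exact ⟨fun j => (h j).1, fun j i => (h j).2 i⟩
    · intro h j
      exact ⟨h.1 j, fun i => h.2 j i⟩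
  have : (T A m n).card = ∑ p ∈ (piFinset fun _ : Fin (m + 1) => A - A) ×ˢ
      (piFinset fun _ : Fin (n + 2) => A), if ∀ j i, p.2 j - p.1 i ∈ A then 1 else 0 := by
    rw [T, Finset.card_filter]
  rw [this, Finset.sum_product]
  refine Finset.sum_congr rfl fun x _ => ?_
  rw [hRpow x, Finset.card_filter]

open Fintype in
/-- The "transpose" map between the two counting finsets. -/
def tmap {G : Type*} [AddCommGroup G] (m n : ℕ)
    (p : (Fin (m + 1) → G) × (Fin (n + 2) → G)) :
    (Fin (n + 1) → G) × (Fin (m + 2) → G) :=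
  (fun j => p.2 0 - p.2 j.succ, Fin.cons (p.2 0) fun i => p.2 0 - p.1 i)

lemma tmap_mem {G : Type*} [AddCommGroup G] [DecidableEq G] (A : Finset G) (m n : ℕ)
    (p : (Fin (m + 1) → G) × (Fin (n + 2) → G)) (hp : p ∈ T A m n) :
    tmap m n p ∈ T A n m := by
  rw [mem_T_iff] at hp ⊢
  obtain ⟨hx, ha, hc⟩ := hp
  refine ⟨fun j => Finset.sub_mem_sub (ha 0) (ha j.succ), ?_, ?_⟩
  · intro i
    refine Fin.cases ?_ ?_ i
    · simpa [tmap] using ha 0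
    · intro i'
      simpa [tmap] using hc 0 i'
  · intro i j
    refine Fin.cases ?_ ?_ i
    · have : p.2 0 - (p.2 0 - p.2 j.succ) = p.2 j.succ := by abel
      simpa [tmap, this] using ha j.succ
    · intro i'
      have : p.2 0 - p.1 i' - (p.2 0 - p.2 j.succ) = p.2 j.succ - p.1 i' := by abel
      simpa [tmap, this] using hc j.succ i'

lemma tmap_tmap {G : Type*} [AddCommGroup G] (m n : ℕ)
    (p : (Fin (m + 1) → G) × (Fin (n + 2) → G)) :
    tmap n m (tmap m n p) = p := by
  obtain ⟨x, a⟩ := p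
  unfold tmap
  refine Prod.ext ?_ ?_
  · funext i
    simp only []
    rw [Fin.cons_zero, Fin.cons_succ]
    abel
  · funext j
    refine Fin.cases ?_ ?_ j
    · simp [Fin.cons_zero]
    · intro j'
      simp only [Fin.cons_succ, Fin.cons_zero]
      abel

lemma T_card_comm {G : Type*} [AddCommGroup G] [DecidableEq G] (A : Finset G) (m n : ℕ) :
    (T A m n).card = (T A n m).card :=
  Finset.card_nbij' (tmap m n) (tmap n m) (tmap_mem A m n) (tmap_mem A n m)
    (fun p _ => tmap_tmap m n p) (fun p _ => tmap_tmap n m p)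

theorem stmt0 {G : Type*} [AddCommGroup G] [DecidableEq G] (A : Finset G)
    (hA : A.Nonempty) (k l : ℕ) (hk : 2 ≤ k) (hl : 2 ≤ l) :
    ∑ᶠ x : Fin (k - 1) → G, (R A x) ^ l = ∑ᶠ y : Fin (l - 1) → G, (R A y) ^ k := by
  obtain ⟨m, rfl⟩ : ∃ m, k = m + 2 := ⟨k - 2, by omega⟩
  obtain ⟨n, rfl⟩ : ∃ n, l = n + 2 := ⟨l - 2, by omega⟩
  show ∑ᶠ x : Fin (m + 1) → G, R A x ^ (n + 2) = ∑ᶠ y : Fin (n + 1) → G, R A y ^ (m + 2)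
  rw [finsum_eq_T_card A m n, finsum_eq_T_card A n m, T_card_comm]
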